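/- Let l ≥ 2 be an integer, set r = l⁴ + 1, let N_l be the additive subgroup of ℝ⁴ generated by ℤ⁴ and the point (l/r, l²/r, 1/r, 1/r), and let Δ_l ⊂ ℝ² be the convex hull of (1, 0), (−(l−1), 1) and (−(l−1), −1). Then every nonzero point (q₁, q₂, y₁, y₂) ∈ N_l with y₁ ≥ 0 and y₂ ≥ 0 satisfies gauge Δ_l (q₁, q₂) + y₁ + y₂ ≥ 1/(4l). -/

import Mathlib

open Set Pointwise



lemma halfspace_convex (c₁ c₂ : ℝ) : Convex ℝ {u : ℝ × ℝ | c₁ * u.1 + c₂ * u.2 ≤ 1} := by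
  intro u hu v hv s t hs ht hst
  simp only [Set.mem_setOf_eq] at *
  have h1 : (s • u + t • v).1 = s * u.1 + t * v.1 := rfl
  have h2 : (s • u + t • v).2 = s * u.2 + t * v.2 := rfl
  rw [h1, h2]
  nlinarith [mul_le_mul_of_nonneg_left hu hs, mul_le_mul_of_nonneg_left hv ht]

lemma gauge_lb (Δ : Set (ℝ × ℝ)) (x : ℝ × ℝ) (c₁ c₂ : ℝ)
    (hub : ∀ u ∈ Δ, c₁ * u.1 + c₂ * u.2 ≤ 1)
    (hne : {t : ℝ | 0 < t ∧ x ∈ t • Δ}.Nonempty) :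
    c₁ * x.1 + c₂ * x.2 ≤ gauge Δ x := by
  rcases le_or_gt (c₁ * x.1 + c₂ * x.2) 0 with h | h
  · exact h.trans (gauge_nonneg x)
  · refine le_csInf hne ?_
    rintro t ⟨ht, hx⟩
    obtain ⟨u, hu, rfl⟩ := hx
    have h1 : c₁ * u.1 + c₂ * u.2 ≤ 1 := hub u hu
    have hx1 : (t • u).1 = t * u.1 := rfl
    have hx2 : (t • u).2 = t * u.2 := rfl
    rw [hx1, hx2]
    nlinarith


lemma triangle_mem {L : ℝ} (hL : 2 ≤ L) (u₁ u₂ : ℝ) (hu₁ : |u₁| ≤ 1 / 2)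
    (hu₂ : |u₂| ≤ 1 / (4 * L)) :
    (u₁, u₂) ∈ convexHull ℝ
      ({((1 : ℝ), (0 : ℝ)), (-(L - 1), 1), (-(L - 1), -1)} : Set (ℝ × ℝ)) := by
  have hL0 : 0 < L := by linarith
  have hu₁' := abs_le.1 hu₁
  have hu₂' := abs_le.1 hu₂
  obtain ⟨σ, hσdef⟩ : ∃ σ : ℝ, σ = (1 - u₁) / L := ⟨_, rfl⟩
  have hσL : σ * L = 1 - u₁ := by rw [hσdef, div_mul_cancel₀ _ hL0.ne']
  have hσl : 1 / (2 * L) ≤ σ := by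
    rw [hσdef, div_le_div_iff₀ (by positivity) hL0]; nlinarith
  have hσu : σ ≤ 3 / (2 * L) := by
    rw [hσdef, div_le_div_iff₀ hL0 (by positivity)]; nlinarith
  have hσ0 : 0 < σ := lt_of_lt_of_le (by positivity) hσl
  have hu₂σ : |u₂| ≤ σ := by
    refine hu₂.trans (le_trans ?_ hσl)
    rw [div_le_div_iff₀ (by positivity) (by positivity)]; nlinarith
  have hu₂σ' := abs_le.1 hu₂σ
  rw [show ({((1 : ℝ), (0 : ℝ)), (-(L - 1), 1), (-(L - 1), -1)} : Set (ℝ × ℝ)) =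
      insert ((1 : ℝ), (0 : ℝ)) {(-(L - 1), 1), (-(L - 1), -1)} from rfl,
    convexHull_insert ⟨_, Set.mem_insert _ _⟩, convexHull_pair, mem_convexJoin]
  refine ⟨((1 : ℝ), (0 : ℝ)), rfl, (-(L - 1), u₂ / σ), ?_, ?_⟩
  · refine ⟨(1 + u₂ / σ) / 2, (1 - u₂ / σ) / 2, ?_, ?_, by ring, ?_⟩
    · have : -1 ≤ u₂ / σ := by rw [le_div_iff₀ hσ0]; nlinarith
      linarith
    · have : u₂ / σ ≤ 1 := by rw [div_le_iff₀ hσ0]; nlinarith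
      linarith
    · simp only [Prod.smul_mk, Prod.mk_add_mk, Prod.mk.injEq, smul_eq_mul]
      constructor <;> ring
  · refine ⟨1 - σ, σ, ?_, hσ0.le, by ring, ?_⟩
    · have : 3 / (2 * L) ≤ 3 / 4 := by
        rw [div_le_div_iff₀ (by positivity) (by norm_num)]; nlinarith
      linarith
    · simp only [Prod.smul_mk, Prod.mk_add_mk, Prod.mk.injEq, smul_eq_mul]
      constructor
      · linear_combination -hσL
      · rw [mul_div_cancel₀ _ hσ0.ne']; ring

lemma gauge_set_ne {l : ℕ} (hl : 2 ≤ l) (x : ℝ × ℝ) :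
    {t : ℝ | 0 < t ∧ x ∈ t • (convexHull ℝ
      {((1 : ℝ), (0 : ℝ)), (-((l : ℝ) - 1), 1), (-((l : ℝ) - 1), -1)})}.Nonempty := by
  have hL : (2 : ℝ) ≤ (l : ℝ) := by exact_mod_cast hl
  have hL0 : (0 : ℝ) < (l : ℝ) := by linarith
  obtain ⟨t, htdef⟩ : ∃ t : ℝ, t = 1 + 2 * |x.1| + 4 * (l : ℝ) * |x.2| := ⟨_, rfl⟩
  have ht0 : 0 < t := by
    rw [htdef]; positivity
  refine ⟨t, ht0, ?_⟩
  rw [Set.mem_smul_set]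
  refine ⟨(x.1 / t, x.2 / t), ?_, ?_⟩
  · refine triangle_mem hL _ _ ?_ ?_
    · rw [abs_div, abs_of_pos ht0, div_le_div_iff₀ ht0 (by norm_num)]
      have := abs_nonneg x.1; have := abs_nonneg x.2
      nlinarith
    · rw [abs_div, abs_of_pos ht0, div_le_div_iff₀ ht0 (by positivity)]
      have := abs_nonneg x.1; have := abs_nonneg x.2
      nlinarith
  · simp only [Prod.smul_mk, smul_eq_mul]
    rw [mul_div_cancel₀ _ ht0.ne', mul_div_cancel₀ _ ht0.ne']


lemma rep_mem (l r : ℕ) (p : (ℝ × ℝ) × (ℝ × ℝ))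
    (hp : p ∈ AddSubgroup.closure
      ({p : (ℝ × ℝ) × (ℝ × ℝ) | ∃ a b c d : ℤ, p = (((a : ℝ), (b : ℝ)), ((c : ℝ), (d : ℝ)))} ∪
        {(((l : ℝ) / (r : ℝ), (l : ℝ) ^ 2 / (r : ℝ)), (1 / (r : ℝ), 1 / (r : ℝ)))})) :
    ∃ a b c d k : ℤ, p = (((a : ℝ) + k * ((l : ℝ) / r), (b : ℝ) + k * ((l : ℝ) ^ 2 / r)),
      ((c : ℝ) + k * (1 / (r : ℝ)), (d : ℝ) + k * (1 / (r : ℝ)))) := by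
  induction hp using AddSubgroup.closure_induction with
  | mem x hx =>
    rcases hx with ⟨a, b, c, d, rfl⟩ | hx
    · exact ⟨a, b, c, d, 0, by norm_num⟩
    · rw [Set.mem_singleton_iff] at hx
      exact ⟨0, 0, 0, 0, 1, by rw [hx]; norm_num⟩
  | zero => exact ⟨0, 0, 0, 0, 0, by norm_num; rfl⟩
  | add x y hx hy ihx ihy =>
    obtain ⟨a, b, c, d, k, rfl⟩ := ihx
    obtain ⟨a', b', c', d', k', rfl⟩ := ihy
    refine ⟨a + a', b + b', c + c', d + d', k + k', ?_⟩
    simp only [Prod.mk_add_mk, Prod.mk.injEq]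
    push_cast
    refine ⟨⟨by ring, by ring⟩, by ring, by ring⟩
  | neg x hx ihx =>
    obtain ⟨a, b, c, d, k, rfl⟩ := ihx
    refine ⟨-a, -b, -c, -d, -k, ?_⟩
    simp only [Prod.neg_mk, Prod.mk.injEq]
    push_cast
    refine ⟨⟨by ring, by ring⟩, by ring, by ring⟩

lemma gauge_tri {l : ℕ} (hl : 2 ≤ l) (x : ℝ × ℝ) :
    x.1 + (l : ℝ) * x.2 ≤ gauge (convexHull ℝ
        {((1 : ℝ), (0 : ℝ)), (-((l : ℝ) - 1), 1), (-((l : ℝ) - 1), -1)}) x ∧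
    x.1 - (l : ℝ) * x.2 ≤ gauge (convexHull ℝ
        {((1 : ℝ), (0 : ℝ)), (-((l : ℝ) - 1), 1), (-((l : ℝ) - 1), -1)}) x ∧
    -x.1 / ((l : ℝ) - 1) ≤ gauge (convexHull ℝ
        {((1 : ℝ), (0 : ℝ)), (-((l : ℝ) - 1), 1), (-((l : ℝ) - 1), -1)}) x := by
  have hL : (2 : ℝ) ≤ (l : ℝ) := by exact_mod_cast hl
  have hL1 : (0 : ℝ) < (l : ℝ) - 1 := by linarith
  have hub : ∀ c₁ c₂ : ℝ, c₁ * 1 + c₂ * 0 ≤ 1 → c₁ * (-((l : ℝ) - 1)) + c₂ * 1 ≤ 1 →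
      c₁ * (-((l : ℝ) - 1)) + c₂ * (-1) ≤ 1 →
      ∀ u ∈ convexHull ℝ
        ({((1 : ℝ), (0 : ℝ)), (-((l : ℝ) - 1), 1), (-((l : ℝ) - 1), -1)} : Set (ℝ × ℝ)),
        c₁ * u.1 + c₂ * u.2 ≤ 1 := by
    intro c₁ c₂ h1 h2 h3 u hu
    have : convexHull ℝ
        ({((1 : ℝ), (0 : ℝ)), (-((l : ℝ) - 1), 1), (-((l : ℝ) - 1), -1)} : Set (ℝ × ℝ)) ⊆
        {u : ℝ × ℝ | c₁ * u.1 + c₂ * u.2 ≤ 1} := by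
      apply convexHull_min ?_ (halfspace_convex c₁ c₂)
      rintro v hv
      simp only [Set.mem_insert_iff, Set.mem_singleton_iff] at hv
      rcases hv with rfl | rfl | rfl
      · exact h1
      · exact h2
      · exact h3
    exact this hu
  refine ⟨?_, ?_, ?_⟩
  · have := gauge_lb _ x 1 (l : ℝ)
      (hub 1 (l : ℝ) (by norm_num) (by ring_nf; norm_num) (by nlinarith)) (gauge_set_ne hl x)
    linarith
  · have := gauge_lb _ x 1 (-(l : ℝ))
      (hub 1 (-(l : ℝ)) (by norm_num) (by nlinarith) (by ring_nf; norm_num)) (gauge_set_ne hl x)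
    linarith
  · have e : (1 / ((l : ℝ) - 1)) * ((l : ℝ) - 1) = 1 := by field_simp
    have := gauge_lb _ x (-(1 / ((l : ℝ) - 1))) 0
      (hub _ 0 (by nlinarith [one_div_pos.2 hL1]) (by nlinarith) (by nlinarith))
      (gauge_set_ne hl x)
    have e2 : (-(1 / ((l : ℝ) - 1))) * x.1 + 0 * x.2 = -x.1 / ((l : ℝ) - 1) := by ring
    linarith [e2 ▸ this]

set_option maxHeartbeats 2000000 in
/-- Lower bound on the mld of the total space in the paper's Example: every nonzero point
`(q₁,q₂,y₁,y₂)` of `N_l = ℤ⁴ + ℤ·(l/r, l²/r, 1/r, 1/r)` (`r = l⁴+1`) with `y₁, y₂ ≥ 0`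
satisfies `gauge Δ_l (q₁,q₂) + y₁ + y₂ ≥ 1/(4l)`. -/
theorem stmt_10 (l : ℕ) (hl : 2 ≤ l) (r : ℕ) (hr : r = l ^ 4 + 1)
    (N : AddSubgroup ((ℝ × ℝ) × (ℝ × ℝ)))
    (hN : N = AddSubgroup.closure
      ({p : (ℝ × ℝ) × (ℝ × ℝ) | ∃ a b c d : ℤ, p = (((a : ℝ), (b : ℝ)), ((c : ℝ), (d : ℝ)))} ∪
        {(((l : ℝ) / (r : ℝ), (l : ℝ) ^ 2 / (r : ℝ)), (1 / (r : ℝ), 1 / (r : ℝ)))}))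
    (Δ : Set (ℝ × ℝ))
    (hΔ : Δ = convexHull ℝ
      {((1 : ℝ), (0 : ℝ)), (-((l : ℝ) - 1), 1), (-((l : ℝ) - 1), -1)}) :
    ∀ p ∈ N, p ≠ 0 → 0 ≤ p.2.1 → 0 ≤ p.2.2 →
      1 / (4 * (l : ℝ)) ≤ gauge Δ p.1 + p.2.1 + p.2.2 := by
  subst hN hΔ
  intro p hp hp0 hy1 hy2
  obtain ⟨a, b, c, d, k, hpeq⟩ := rep_mem l r p hp
  have hL : (2 : ℝ) ≤ (l : ℝ) := by exact_mod_cast hl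
  have hrz : (0 : ℤ) < (r : ℤ) := by
    have : 0 < r := by omega
    exact_mod_cast this
  have hR0 : (0 : ℝ) < (r : ℝ) := by exact_mod_cast hrz
  have hRne : (r : ℝ) ≠ 0 := hR0.ne'
  have hRval : (r : ℝ) = (l : ℝ) ^ 4 + 1 := by
    rw [hr]; push_cast; ring
  -- reduce k modulo r
  obtain ⟨a', b', c', d', k₀, hk₀0, hk₀r, e₁, e₂, e₃, e₄⟩ :
      ∃ a' b' c' d' k₀ : ℤ, 0 ≤ k₀ ∧ k₀ < (r : ℤ) ∧
        ((a : ℝ) + k * ((l : ℝ) / r) = (a' : ℝ) + k₀ * ((l : ℝ) / r)) ∧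
        ((b : ℝ) + k * ((l : ℝ) ^ 2 / r) = (b' : ℝ) + k₀ * ((l : ℝ) ^ 2 / r)) ∧
        ((c : ℝ) + k * (1 / (r : ℝ)) = (c' : ℝ) + k₀ * (1 / (r : ℝ))) ∧
        ((d : ℝ) + k * (1 / (r : ℝ)) = (d' : ℝ) + k₀ * (1 / (r : ℝ))) := by
    refine ⟨a + l * (k / (r : ℤ)), b + (l : ℤ) ^ 2 * (k / (r : ℤ)), c + k / (r : ℤ),
      d + k / (r : ℤ), k % (r : ℤ), Int.emod_nonneg k hrz.ne', Int.emod_lt_of_pos k hrz,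
      ?_, ?_, ?_, ?_⟩ <;>
    · have hk : ((r : ℤ) * (k / (r : ℤ)) + k % (r : ℤ) : ℤ) = k := Int.mul_ediv_add_emod k (r : ℤ)
      have hkR : (k : ℝ) = (r : ℝ) * ((k / (r : ℤ) : ℤ) : ℝ) + ((k % (r : ℤ) : ℤ) : ℝ) := by
        exact_mod_cast hk.symm
      rw [hkR]; push_cast; field_simp; ring
  rw [hpeq] at hp0 hy1 hy2 ⊢
  simp only at hy1 hy2 ⊢
  simp only [e₁, e₂, e₃, e₄] at hp0 hy1 hy2 ⊢
  clear hpeq hp e₁ e₂ e₃ e₄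
  have hK0 : (0 : ℝ) ≤ (k₀ : ℝ) := by exact_mod_cast hk₀0
  have hKR : (k₀ : ℝ) < (r : ℝ) := by exact_mod_cast hk₀r
  obtain ⟨hG1, hG2, hG3⟩ := gauge_tri hl
    (((a' : ℝ) + k₀ * ((l : ℝ) / r), (b' : ℝ) + k₀ * ((l : ℝ) ^ 2 / r)))
  simp only at hG1 hG2 hG3
  have hG0 : 0 ≤ gauge (convexHull ℝ
      {((1 : ℝ), (0 : ℝ)), (-((l : ℝ) - 1), 1), (-((l : ℝ) - 1), -1)})
      (((a' : ℝ) + k₀ * ((l : ℝ) / r), (b' : ℝ) + k₀ * ((l : ℝ) ^ 2 / r))) := gauge_nonneg _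
  have h18 : 1 / (4 * (l : ℝ)) ≤ 1 := by
    rw [div_le_one (by positivity)]; linarith
  rcases eq_or_lt_of_le hk₀0 with hk0 | hk0pos
  · -- k₀ = 0 : integer point
    obtain rfl : k₀ = 0 := hk0.symm
    simp only [Int.cast_zero, zero_mul, add_zero] at hG1 hG2 hG3 hG0 hy1 hy2 hp0 ⊢
    have hc0 : 0 ≤ c' := by exact_mod_cast hy1
    have hd0 : 0 ≤ d' := by exact_mod_cast hy2
    by_cases hcd : c' = 0 ∧ d' = 0
    · obtain ⟨rfl, rfl⟩ := hcd
      simp only [Int.cast_zero] at hp0 ⊢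
      have hab : ¬(a' = 0 ∧ b' = 0) := by
        rintro ⟨rfl, rfl⟩
        exact hp0 (by norm_num)
      rcases lt_trichotomy a' 0 with ha | ha | ha
      · have haR : (a' : ℝ) ≤ -1 := by
          have h : a' ≤ -1 := by omega
          exact_mod_cast h
        have : 1 / (4 * (l : ℝ)) ≤ -(a' : ℝ) / ((l : ℝ) - 1) := by
          rw [div_le_div_iff₀ (by positivity) (by linarith)]
          nlinarith
        linarith
      · have hb : b' ≠ 0 := fun hb => hab ⟨ha, hb⟩
        have haR : (a' : ℝ) = 0 := by exact_mod_cast ha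
        rcases lt_trichotomy b' 0 with hbn | hbn | hbn
        · have hbR : (b' : ℝ) ≤ -1 := by
            have h : b' ≤ -1 := by omega
            exact_mod_cast h
          nlinarith
        · exact absurd hbn hb
        · have hbR : (1 : ℝ) ≤ (b' : ℝ) := by exact_mod_cast hbn
          nlinarith
      · have haR : (1 : ℝ) ≤ (a' : ℝ) := by exact_mod_cast ha
        rcases le_or_gt 0 ((b' : ℝ)) with hbq | hbq
        · nlinarith
        · nlinarith
    · have hone : (1 : ℝ) ≤ (c' : ℝ) + (d' : ℝ) := by
        have h : 1 ≤ c' + d' := by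
          rcases not_and_or.1 hcd with h | h <;> omega
        exact_mod_cast h
      linarith
  · -- k₀ ≥ 1
    have hK1 : (1 : ℝ) ≤ (k₀ : ℝ) := by exact_mod_cast hk0pos
    have hKRdiv : (k₀ : ℝ) * (1 / (r : ℝ)) < 1 := by
      rw [mul_one_div, div_lt_one hR0]; exact hKR
    have hy1' : (k₀ : ℝ) * (1 / (r : ℝ)) ≤ (c' : ℝ) + k₀ * (1 / (r : ℝ)) := by
      have hc0 : (0 : ℝ) ≤ (c' : ℝ) := by
        by_contra h
        push_neg at h
        have hcz : c' < 0 := by exact_mod_cast h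
        have : (c' : ℝ) ≤ -1 := by
          have h2 : c' ≤ -1 := by omega
          exact_mod_cast h2
        linarith
      linarith
    have hy2' : (k₀ : ℝ) * (1 / (r : ℝ)) ≤ (d' : ℝ) + k₀ * (1 / (r : ℝ)) := by
      have hd0 : (0 : ℝ) ≤ (d' : ℝ) := by
        by_contra h
        push_neg at h
        have hdz : d' < 0 := by exact_mod_cast h
        have : (d' : ℝ) ≤ -1 := by
          have h2 : d' ≤ -1 := by omega
          exact_mod_cast h2
        linarith
      linarith
    by_cases h8 : (r : ℝ) ≤ 8 * (l : ℝ) * (k₀ : ℝ)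
    · have hmain : 1 / (4 * (l : ℝ)) ≤ 2 * ((k₀ : ℝ) * (1 / (r : ℝ))) := by
        rw [mul_one_div, mul_div_assoc', div_le_div_iff₀ (by positivity) hR0]
        nlinarith
      linarith
    · push_neg at h8
      have hq1small : (k₀ : ℝ) * ((l : ℝ) / r) < 1 / 8 := by
        rw [mul_div_assoc', div_lt_div_iff₀ hR0 (by norm_num)]
        nlinarith
      have hq1pos : 0 < (k₀ : ℝ) * ((l : ℝ) / r) := by positivity
      rcases lt_trichotomy a' 0 with ha | ha | ha
      · have haR : (a' : ℝ) ≤ -1 := by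
          have h : a' ≤ -1 := by omega
          exact_mod_cast h
        have : 1 / (4 * (l : ℝ)) ≤
            -((a' : ℝ) + k₀ * ((l : ℝ) / r)) / ((l : ℝ) - 1) := by
          rw [div_le_div_iff₀ (by positivity) (by linarith)]
          nlinarith
        linarith
      · -- a' = 0 : the delicate case
        have haR : (a' : ℝ) = 0 := by exact_mod_cast ha
        rw [haR] at hG1 hG2 hG3 hG0 ⊢
        simp only [zero_add] at hG1 hG2 hG3 hG0 ⊢
        by_cases hb1 : 1 / (4 * (l : ℝ) ^ 2) ≤ (b' : ℝ) + k₀ * ((l : ℝ) ^ 2 / r)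
        · rw [div_le_iff₀ (by positivity : (0 : ℝ) < 4 * (l : ℝ) ^ 2)] at hb1
          have hmain : 1 / (4 * (l : ℝ)) ≤
              (l : ℝ) * ((b' : ℝ) + k₀ * ((l : ℝ) ^ 2 / r)) := by
            rw [div_le_iff₀ (by positivity)]
            nlinarith
          linarith
        push_neg at hb1
        by_cases hb2 : (b' : ℝ) + k₀ * ((l : ℝ) ^ 2 / r) ≤ -(1 / (4 * (l : ℝ) ^ 2))
        · have hb2' : (1 : ℝ) ≤
              (-((b' : ℝ) + k₀ * ((l : ℝ) ^ 2 / r))) * (4 * (l : ℝ) ^ 2) := by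
            rw [← div_le_iff₀ (by positivity : (0 : ℝ) < 4 * (l : ℝ) ^ 2)]
            linarith
          have hmain : 1 / (4 * (l : ℝ)) ≤
              (l : ℝ) * (-((b' : ℝ) + k₀ * ((l : ℝ) ^ 2 / r))) := by
            rw [div_le_iff₀ (by positivity)]
            nlinarith
          linarith
        push_neg at hb2
        -- |q₂| < 1/(4l²) : rigidity forces k₀ = (-b')·l²
        have hT : (r : ℝ) * (((k₀ + b' * (l : ℤ) ^ 2 : ℤ)) : ℝ) - (k₀ : ℝ) =
            (l : ℝ) ^ 2 * ((r : ℝ) * ((b' : ℝ) + k₀ * ((l : ℝ) ^ 2 / r))) := by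
          push_cast
          rw [hRval]
          field_simp
          ring
        have hq2u : (l : ℝ) ^ 2 * ((r : ℝ) * ((b' : ℝ) + k₀ * ((l : ℝ) ^ 2 / r))) <
            (r : ℝ) / 4 := by
          have h1 : (l : ℝ) ^ 2 * (r : ℝ) * ((b' : ℝ) + k₀ * ((l : ℝ) ^ 2 / r)) <
              (l : ℝ) ^ 2 * (r : ℝ) * (1 / (4 * (l : ℝ) ^ 2)) :=
            mul_lt_mul_of_pos_left hb1 (by positivity)
          have h2 : (l : ℝ) ^ 2 * (r : ℝ) * (1 / (4 * (l : ℝ) ^ 2)) = (r : ℝ) / 4 := by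
            field_simp
          nlinarith
        have hq2l : -((r : ℝ) / 4) <
            (l : ℝ) ^ 2 * ((r : ℝ) * ((b' : ℝ) + k₀ * ((l : ℝ) ^ 2 / r))) := by
          have h1 : (l : ℝ) ^ 2 * (r : ℝ) * (-(1 / (4 * (l : ℝ) ^ 2))) <
              (l : ℝ) ^ 2 * (r : ℝ) * ((b' : ℝ) + k₀ * ((l : ℝ) ^ 2 / r)) :=
            mul_lt_mul_of_pos_left hb2 (by positivity)
          have h2 : (l : ℝ) ^ 2 * (r : ℝ) * (-(1 / (4 * (l : ℝ) ^ 2))) = -((r : ℝ) / 4) := by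
            field_simp
          nlinarith
        have hKsmall : 16 * (k₀ : ℝ) < (r : ℝ) := by nlinarith
        have ht0 : k₀ + b' * (l : ℤ) ^ 2 = 0 := by
          rcases lt_trichotomy (k₀ + b' * (l : ℤ) ^ 2) 0 with ht | ht | ht
          · exfalso
            have htR : ((k₀ + b' * (l : ℤ) ^ 2 : ℤ) : ℝ) ≤ -1 := by
              have h : k₀ + b' * (l : ℤ) ^ 2 ≤ -1 := by omega
              exact_mod_cast h
            have hmul : (r : ℝ) * ((k₀ + b' * (l : ℤ) ^ 2 : ℤ) : ℝ) ≤ (r : ℝ) * (-1) :=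
              mul_le_mul_of_nonneg_left htR hR0.le
            linarith
          · exact ht
          · exfalso
            have htR : (1 : ℝ) ≤ ((k₀ + b' * (l : ℤ) ^ 2 : ℤ) : ℝ) := by
              have h : 1 ≤ k₀ + b' * (l : ℤ) ^ 2 := by omega
              exact_mod_cast h
            have hmul : (r : ℝ) * (1 : ℝ) ≤ (r : ℝ) * ((k₀ + b' * (l : ℤ) ^ 2 : ℤ) : ℝ) :=
              mul_le_mul_of_nonneg_left htR hR0.le
            linarith
        have hm1 : 1 ≤ -b' := by
          rcases le_or_gt (-b') 0 with hm | hm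
          · exfalso
            have hkm : k₀ = (-b') * (l : ℤ) ^ 2 := by linarith [ht0]
            have h2 : (-b') * (l : ℤ) ^ 2 ≤ 0 :=
              mul_nonpos_of_nonpos_of_nonneg hm (by positivity)
            omega
          · omega
        have hM1 : (1 : ℝ) ≤ -(b' : ℝ) := by
          have h := hm1
          have : ((1 : ℤ) : ℝ) ≤ ((-b' : ℤ) : ℝ) := by exact_mod_cast h
          push_cast at this
          linarith
        have hKM : (k₀ : ℝ) = -(b' : ℝ) * (l : ℝ) ^ 2 := by
          have hkm : k₀ = (-b') * (l : ℤ) ^ 2 := by linarith [ht0]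
          have : ((k₀ : ℤ) : ℝ) = (((-b') * (l : ℤ) ^ 2 : ℤ) : ℝ) := by exact_mod_cast hkm
          push_cast at this
          linarith
        have hq1val : (k₀ : ℝ) * ((l : ℝ) / r) = -(b' : ℝ) * (l : ℝ) ^ 3 / r := by
          rw [hKM]; ring
        have hq₂val : (b' : ℝ) + k₀ * ((l : ℝ) ^ 2 / r) = -(-(b' : ℝ) / r) := by
          rw [hKM]
          field_simp
          linear_combination (b' : ℝ) * hRval
        have hstep : 1 / (4 * (l : ℝ)) ≤ -(b' : ℝ) * (l : ℝ) ^ 3 / r := by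
          rw [div_le_div_iff₀ (by positivity) hR0, hRval]
          nlinarith
        have hLq2 : (l : ℝ) * ((b' : ℝ) + k₀ * ((l : ℝ) ^ 2 / r)) =
            -(-(b' : ℝ) * (l : ℝ) / r) := by
          rw [hq₂val]; ring
        have hMLR : (0 : ℝ) ≤ -(b' : ℝ) * (l : ℝ) / r := by
          apply div_nonneg _ hR0.le
          nlinarith
        linarith [hG2, hq1val, hLq2, hstep, hMLR, hy1, hy2]
      · have haR : (1 : ℝ) ≤ (a' : ℝ) := by exact_mod_cast ha
        rcases le_or_gt 0 ((b' : ℝ) + k₀ * ((l : ℝ) ^ 2 / r)) with hbq | hbq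
        · nlinarith
        · nlinarith
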